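/- Under the PD payoff assumptions, with screening fee δ = (1/2)π(C,C) + (1/2)π(D,C) - π(D,D) and inheritance discount p ∈ [0,1], the material payoff difference under screening F_θ - F_τ = π(C,C) - δ(1-p) - π(D,D) is strictly positive if p > Δ_p, strictly negative if p < Δ_p, and zero if p = Δ_p, where Δ_p = (π(D,C) - π(C,C))/(π(C,C) + π(D,C) - 2π(D,D)). -/

import Mathlib

theorem stmt10 (πDC πCC πDD πCD : ℝ)
    (h1 : πDC > πCC) (h2 : πCC > πDD) (h3 : πDD > πCD) :
    ∀ p : ℝ, 0 ≤ p → p ≤ 1 →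
      (p > (πDC - πCC) / (πCC + πDC - 2 * πDD) →
        0 < πCC - ((1/2) * πCC + (1/2) * πDC - πDD) * (1 - p) - πDD) ∧
      (p < (πDC - πCC) / (πCC + πDC - 2 * πDD) →
        πCC - ((1/2) * πCC + (1/2) * πDC - πDD) * (1 - p) - πDD < 0) ∧
      (p = (πDC - πCC) / (πCC + πDC - 2 * πDD) →
        πCC - ((1/2) * πCC + (1/2) * πDC - πDD) * (1 - p) - πDD = 0) := by
  intro p _ _
  have hpos : 0 < πCC + πDC - 2 * πDD := by linarith
  have key : πCC - ((1/2) * πCC + (1/2) * πDC - πDD) * (1 - p) - πDD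
      = ((πCC + πDC - 2 * πDD) * p - (πDC - πCC)) / 2 := by ring
  refine ⟨?_, ?_, ?_⟩
  · intro h
    rw [gt_iff_lt, div_lt_iff₀ hpos] at h
    rw [key]; linarith
  · intro h
    rw [lt_div_iff₀ hpos] at h
    rw [key]; linarith
  · intro h
    rw [key, h]
    field_simp
    ring
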